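/- Let λ and β be positive random variables on a probability space (Ω, 𝓕, ℙ) satisfying 𝔼[(β/λ^{1/β}) ((β+1)/β)^{(β+1)/β}] < ∞, and let F(t) = 𝔼[1 − exp(−λ (t/(1−t))^β)] for t ∈ (0,1). Then for every t ∈ (0,1) the random variable h(t; λ, β) is integrable and F is differentiable at t with derivative F′(t) = 𝔼[h(t; λ, β)]; moreover 1 − F(t) = 𝔼[exp(−λ (t/(1−t))^β)]. -/

import Mathlib

open MeasureTheory Filter Set

lemma kies_deriv (l b x : ℝ) (hl : 0 < l) (hb : 0 < b) (hx : 0 < x) (hx1 : x < 1) :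
    HasDerivAt (fun s => 1 - Real.exp (-l * (s / (1 - s)) ^ b))
      (l * b * x ^ (b - 1) * (1 - x) ^ (-(b + 1)) *
        Real.exp (-l * (x / (1 - x)) ^ b)) x := by
  have h1x : (0:ℝ) < 1 - x := by linarith
  have hu : 0 < x / (1 - x) := div_pos hx h1x
  have hdu : HasDerivAt (fun s : ℝ => s / (1 - s)) ((1 - x)⁻¹ ^ 2) x := by
    have := (hasDerivAt_id x).div ((hasDerivAt_id x).const_sub 1) (ne_of_gt h1x)
    refine this.congr_deriv ?_
    simp only [id]
    field_simp
    ring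
  have hpow : HasDerivAt (fun s : ℝ => (s / (1 - s)) ^ b)
      ((1 - x)⁻¹ ^ 2 * b * (x / (1 - x)) ^ (b - 1)) x :=
    hdu.rpow_const (Or.inl (ne_of_gt hu))
  have hexp := ((hpow.const_mul (-l)).exp).const_sub 1
  refine hexp.congr_deriv ?_
  have hub : (x / (1 - x)) ^ (b - 1) = x ^ (b - 1) / (1 - x) ^ (b - 1) := by
    rw [Real.div_rpow hx.le h1x.le]
  have hsplit : (1 - x) ^ (-(b + 1)) = (1 - x) ^ (-(b - 1)) * (1 - x)⁻¹ ^ 2 := by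
    rw [← Real.rpow_natCast (1 - x)⁻¹ 2, ← Real.rpow_neg_one (1 - x),
      ← Real.rpow_mul h1x.le, ← Real.rpow_add h1x]
    ring
  have hneg : (1 - x) ^ (-(b - 1)) = ((1 - x) ^ (b - 1))⁻¹ := Real.rpow_neg h1x.le _
  rw [hub, hsplit, hneg]
  have hne : (1 - x) ^ (b - 1) ≠ 0 := ne_of_gt (Real.rpow_pos_of_pos h1x _)
  field_simp

lemma kies_bound (l b x : ℝ) (hl : 0 < l) (hb : 0 < b) (hx : 0 < x) (hx1 : x < 1) :
    l * b * x ^ (b - 1) * (1 - x) ^ (-(b + 1)) * Real.exp (-l * (x / (1 - x)) ^ b)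
      ≤ x⁻¹ ^ 2 * (b / l ^ (1 / b) * ((b + 1) / b) ^ ((b + 1) / b)) := by
  have h1x : (0:ℝ) < 1 - x := by linarith
  have hu : 0 < x / (1 - x) := div_pos hx h1x
  set u := x / (1 - x) with hu_def
  set p := (b + 1) / b with hp_def
  have hp : 0 < p := div_pos (by linarith) hb
  set z := l * u ^ b with hz_def
  have hz : 0 < z := mul_pos hl (Real.rpow_pos_of_pos hu b)
  have hzp : (0:ℝ) < z ^ p := Real.rpow_pos_of_pos hz p
  have hpp : (0:ℝ) < p ^ p := Real.rpow_pos_of_pos hp p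
  -- step 1: exp (-z) ≤ p^p * z^(-p)
  have hlog : Real.log (z / p) ≤ z / p - 1 := Real.log_le_sub_one_of_pos (div_pos hz hp)
  have h2 : p * Real.log (z / p) ≤ z - p := by
    have := mul_le_mul_of_nonneg_left hlog hp.le
    rw [mul_sub, mul_one, mul_div_cancel₀ _ (ne_of_gt hp)] at this
    linarith
  have h3 : (z / p) ^ p ≤ Real.exp z := by
    rw [Real.rpow_def_of_pos (div_pos hz hp)]
    calc Real.exp (Real.log (z / p) * p) ≤ Real.exp (z - p) := by
          apply Real.exp_le_exp.2; rw [mul_comm]; exact h2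
      _ ≤ Real.exp z := Real.exp_le_exp.2 (by linarith)
  have h4 : z ^ p ≤ p ^ p * Real.exp z := by
    rw [Real.div_rpow hz.le hp.le, div_le_iff₀ hpp] at h3
    linarith [h3]
  have hexp_bound : Real.exp (-z) ≤ p ^ p * z ^ (-p) := by
    rw [Real.rpow_neg hz.le]
    have he : Real.exp z * Real.exp (-z) = 1 := by
      rw [← Real.exp_add]; simp
    have h5 : Real.exp (-z) * z ^ p ≤ p ^ p := by
      nlinarith [mul_le_mul_of_nonneg_left h4 (Real.exp_pos (-z)).le]
    rw [← mul_le_mul_iff_of_pos_right hzp]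
    calc Real.exp (-z) * z ^ p ≤ p ^ p := h5
      _ = p ^ p * (z ^ p)⁻¹ * z ^ p := by field_simp
  -- step 2: identity
  have key : l * b * x ^ (b - 1) * (1 - x) ^ (-(b + 1)) * (p ^ p * z ^ (-p))
      = x⁻¹ ^ 2 * (b / l ^ (1 / b) * p ^ p) := by
    have hzz : z ^ (-p) = l ^ (-p) * u ^ (-(b + 1)) := by
      rw [hz_def, Real.mul_rpow hl.le (Real.rpow_pos_of_pos hu b).le,
        ← Real.rpow_mul hu.le]
      congr 2
      rw [hp_def]
      field_simp
    have hu2 : u ^ (-(b + 1)) = x ^ (-(b + 1)) / (1 - x) ^ (-(b + 1)) := by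
      rw [hu_def, Real.div_rpow hx.le h1x.le]
    have hx2 : x ^ (b - 1) * x ^ (-(b + 1)) = x⁻¹ ^ 2 := by
      rw [← Real.rpow_add hx, show b - 1 + -(b + 1) = (-2:ℝ) by ring,
        Real.rpow_neg hx.le, show (2:ℝ) = ((2:ℕ):ℝ) by norm_num,
        Real.rpow_natCast, inv_pow]
    have hl2 : l * l ^ (-p) = (l ^ (1 / b))⁻¹ := by
      nth_rewrite 1 [← Real.rpow_one l]
      rw [← Real.rpow_add hl, ← Real.rpow_neg hl.le]
      congr 1
      rw [hp_def]
      field_simp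
      ring
    have hne1 : ((1 - x) : ℝ) ^ (-(b + 1)) ≠ 0 := ne_of_gt (Real.rpow_pos_of_pos h1x _)
    rw [hzz, hu2, div_eq_mul_inv b (l ^ (1/b)), ← hl2, ← hx2]
    field_simp
  calc l * b * x ^ (b - 1) * (1 - x) ^ (-(b + 1)) * Real.exp (-l * u ^ b)
      ≤ l * b * x ^ (b - 1) * (1 - x) ^ (-(b + 1)) * (p ^ p * z ^ (-p)) := by
        apply mul_le_mul_of_nonneg_left _ (by positivity)
        rw [show -l * u ^ b = -z by rw [hz_def]; ring]
        exact hexp_bound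
    _ = x⁻¹ ^ 2 * (b / l ^ (1 / b) * p ^ p) := key

theorem mixed_kies_density
    {Ω : Type*} [MeasurableSpace Ω] (μ : Measure Ω) [IsProbabilityMeasure μ]
    (lam beta : Ω → ℝ) (hlam_meas : Measurable lam) (hbeta_meas : Measurable beta)
    (hlam_pos : ∀ ω, 0 < lam ω) (hbeta_pos : ∀ ω, 0 < beta ω)
    (hcond : Integrable (fun ω =>
        beta ω / lam ω ^ (1 / beta ω) *
          ((beta ω + 1) / beta ω) ^ ((beta ω + 1) / beta ω)) μ)
    (F : ℝ → ℝ)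
    (hF : ∀ t, F t = ∫ ω, (1 - Real.exp (-(lam ω) * (t / (1 - t)) ^ (beta ω))) ∂μ)
    (t : ℝ) (ht : t ∈ Set.Ioo (0 : ℝ) 1) :
    Integrable (fun ω => lam ω * beta ω * t ^ (beta ω - 1) * (1 - t) ^ (-(beta ω + 1)) *
        Real.exp (-(lam ω) * (t / (1 - t)) ^ (beta ω))) μ ∧
    HasDerivAt F (∫ ω, lam ω * beta ω * t ^ (beta ω - 1) * (1 - t) ^ (-(beta ω + 1)) *
        Real.exp (-(lam ω) * (t / (1 - t)) ^ (beta ω)) ∂μ) t ∧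
    1 - F t = ∫ ω, Real.exp (-(lam ω) * (t / (1 - t)) ^ (beta ω)) ∂μ := by
  obtain ⟨ht0, ht1⟩ := ht
  have h1t : (0:ℝ) < 1 - t := by linarith
  set ε : ℝ := min t (1 - t) / 2 with hε_def
  have hε_pos : 0 < ε := by
    have h : 0 < min t (1 - t) := lt_min ht0 h1t
    positivity
  have hball : ∀ x ∈ Metric.ball t ε, 0 < x ∧ x < 1 ∧ t / 2 ≤ x := by
    intro x hx
    rw [Metric.mem_ball, Real.dist_eq, abs_sub_lt_iff] at hx
    have h1 : ε ≤ t / 2 := by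
      rw [hε_def]
      have := min_le_left t (1 - t)
      linarith
    have h2 : ε ≤ (1 - t) / 2 := by
      rw [hε_def]
      have := min_le_right t (1 - t)
      linarith
    refine ⟨by linarith [hx.2], by linarith [hx.1], by linarith [hx.2]⟩
  -- measurability of the exp term for each x
  have hexp_meas : ∀ x : ℝ, 0 < x → x < 1 → Measurable fun ω =>
      Real.exp (-(lam ω) * (x / (1 - x)) ^ (beta ω)) := by
    intro x hx hx1
    have hu : 0 < x / (1 - x) := div_pos hx (by linarith)
    have : (fun ω => Real.exp (-(lam ω) * (x / (1 - x)) ^ (beta ω)))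
        = fun ω => Real.exp (-(lam ω) * Real.exp (Real.log (x / (1 - x)) * beta ω)) := by
      funext ω
      rw [Real.rpow_def_of_pos hu]
    rw [this]
    exact ((hlam_meas.neg).mul ((measurable_const.mul hbeta_meas).exp)).exp
  have hexp_bounds : ∀ x : ℝ, 0 < x → x < 1 → ∀ ω,
      0 < Real.exp (-(lam ω) * (x / (1 - x)) ^ (beta ω)) ∧
      Real.exp (-(lam ω) * (x / (1 - x)) ^ (beta ω)) ≤ 1 := by
    intro x hx hx1 ω
    refine ⟨Real.exp_pos _, Real.exp_le_one_iff.2 ?_⟩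
    have hu : 0 < x / (1 - x) := div_pos hx (by linarith)
    have := Real.rpow_pos_of_pos hu (beta ω)
    nlinarith [hlam_pos ω]
  -- measurability of the density term for each x
  have hF'_meas : ∀ x : ℝ, 0 < x → x < 1 → Measurable fun ω =>
      lam ω * beta ω * x ^ (beta ω - 1) * (1 - x) ^ (-(beta ω + 1)) *
        Real.exp (-(lam ω) * (x / (1 - x)) ^ (beta ω)) := by
    intro x hx hx1
    have h1x : (0:ℝ) < 1 - x := by linarith
    have e1 : (fun ω => (x:ℝ) ^ (beta ω - 1))
        = fun ω => Real.exp (Real.log x * (beta ω - 1)) := by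
      funext ω; rw [Real.rpow_def_of_pos hx]
    have e2 : (fun ω => (1 - x:ℝ) ^ (-(beta ω + 1)))
        = fun ω => Real.exp (Real.log (1 - x) * (-(beta ω + 1))) := by
      funext ω; rw [Real.rpow_def_of_pos h1x]
    have m1 : Measurable fun ω => (x:ℝ) ^ (beta ω - 1) := by
      rw [e1]; exact (measurable_const.mul (hbeta_meas.sub measurable_const)).exp
    have m2 : Measurable fun ω => (1 - x:ℝ) ^ (-(beta ω + 1)) := by
      rw [e2]
      exact (measurable_const.mul ((hbeta_meas.add measurable_const).neg)).exp
    exact (((hlam_meas.mul hbeta_meas).mul m1).mul m2).mul (hexp_meas x hx hx1)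
  -- integrability of (1 - exp) terms
  have hFm_int : ∀ x : ℝ, 0 < x → x < 1 → Integrable
      (fun ω => 1 - Real.exp (-(lam ω) * (x / (1 - x)) ^ (beta ω))) μ := by
    intro x hx hx1
    refine (integrable_const (1:ℝ)).mono'
      ((measurable_const.sub (hexp_meas x hx hx1)).aestronglyMeasurable)
      (ae_of_all _ fun ω => ?_)
    have := hexp_bounds x hx hx1 ω
    rw [Real.norm_eq_abs, abs_le]
    constructor <;> nlinarith [this.1, this.2]
  have hexp_int : ∀ x : ℝ, 0 < x → x < 1 → Integrable
      (fun ω => Real.exp (-(lam ω) * (x / (1 - x)) ^ (beta ω))) μ := by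
    intro x hx hx1
    refine (integrable_const (1:ℝ)).mono'
      ((hexp_meas x hx hx1).aestronglyMeasurable)
      (ae_of_all _ fun ω => ?_)
    have := hexp_bounds x hx hx1 ω
    rw [Real.norm_eq_abs, abs_le]
    constructor <;> nlinarith [this.1, this.2]
  -- main application
  have main := hasDerivAt_integral_of_dominated_loc_of_deriv_le (μ := μ)
    (F := fun x ω => 1 - Real.exp (-(lam ω) * (x / (1 - x)) ^ (beta ω)))
    (F' := fun x ω => lam ω * beta ω * x ^ (beta ω - 1) * (1 - x) ^ (-(beta ω + 1)) *
        Real.exp (-(lam ω) * (x / (1 - x)) ^ (beta ω)))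
    (x₀ := t)
    (bound := fun ω => (t / 2)⁻¹ ^ 2 * (beta ω / lam ω ^ (1 / beta ω) *
        ((beta ω + 1) / beta ω) ^ ((beta ω + 1) / beta ω)))
    (Metric.ball_mem_nhds t hε_pos)
    (by
      filter_upwards [Metric.ball_mem_nhds t hε_pos] with x hx
      obtain ⟨hx0, hx1, _⟩ := hball x hx
      exact (measurable_const.sub (hexp_meas x hx0 hx1)).aestronglyMeasurable)
    (hFm_int t ht0 ht1)
    ((hF'_meas t ht0 ht1).aestronglyMeasurable)
    (ae_of_all _ (by
      intro ω x hx
      obtain ⟨hx0, hx1, hxhalf⟩ := hball x hx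
      have hnn : 0 ≤ lam ω * beta ω * x ^ (beta ω - 1) * (1 - x) ^ (-(beta ω + 1)) *
          Real.exp (-(lam ω) * (x / (1 - x)) ^ (beta ω)) := by
        have h1 := (hlam_pos ω).le
        have h2 := (hbeta_pos ω).le
        have h3 := (Real.rpow_pos_of_pos hx0 (beta ω - 1)).le
        have h4 := (Real.rpow_pos_of_pos (show (0:ℝ) < 1 - x by linarith) (-(beta ω + 1))).le
        have h5 := (Real.exp_pos (-(lam ω) * (x / (1 - x)) ^ (beta ω))).le
        positivity
      rw [Real.norm_eq_abs, abs_of_nonneg hnn]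
      calc lam ω * beta ω * x ^ (beta ω - 1) * (1 - x) ^ (-(beta ω + 1)) *
          Real.exp (-(lam ω) * (x / (1 - x)) ^ (beta ω))
          ≤ x⁻¹ ^ 2 * (beta ω / lam ω ^ (1 / beta ω) *
              ((beta ω + 1) / beta ω) ^ ((beta ω + 1) / beta ω)) :=
            kies_bound (lam ω) (beta ω) x (hlam_pos ω) (hbeta_pos ω) hx0 hx1
        _ ≤ (t / 2)⁻¹ ^ 2 * (beta ω / lam ω ^ (1 / beta ω) *
              ((beta ω + 1) / beta ω) ^ ((beta ω + 1) / beta ω)) := by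
            apply mul_le_mul_of_nonneg_right
            · have ht2 : (0:ℝ) < t / 2 := by linarith
              have : x⁻¹ ≤ (t / 2)⁻¹ := by
                apply inv_anti₀ ht2 hxhalf
              exact pow_le_pow_left₀ (inv_nonneg.2 hx0.le) this 2
            · have h1 := (hbeta_pos ω)
              have h2 := Real.rpow_pos_of_pos (hlam_pos ω) (1 / beta ω)
              have h3 := Real.rpow_pos_of_pos
                (show (0:ℝ) < (beta ω + 1) / beta ω from div_pos (by linarith) h1)
                ((beta ω + 1) / beta ω)
              positivity))
    (hcond.const_mul _)
    (ae_of_all _ (by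
      intro ω x hx
      obtain ⟨hx0, hx1, _⟩ := hball x hx
      exact kies_deriv (lam ω) (beta ω) x (hlam_pos ω) (hbeta_pos ω) hx0 hx1))
  obtain ⟨hint, hderiv⟩ := main
  have hFeq : F = fun x => ∫ ω, (1 - Real.exp (-(lam ω) * (x / (1 - x)) ^ (beta ω))) ∂μ :=
    funext hF
  refine ⟨hint, by rw [hFeq]; exact hderiv, ?_⟩
  rw [hF t, integral_sub (integrable_const 1) (hexp_int t ht0 ht1)]
  simp [measure_univ]
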